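/- Let T1, T2 be q-commuting contractions on H and T = T1T2, and let (V1^S, V2^S) be the Schäffer-type pair on H ⊕ H²(F) given by V1^S = [[T1, 0], [ev0* P U Λ D_T, q M_{(P^⊥+zP)U} R_q]] and V2^S = [[T2, 0], [q̄ ev0* U* P^⊥ Λ D_T, q̄ R_{q̄} M_{U*(P+zP^⊥)}]]. Then V1^S V2^S = q V2^S V1^S, and both V1^S and V2^S are isometries; in particular every q-commuting contractive pair lifts to a q-commuting isometric pair. -/

import Mathlib

set_option synthInstance.maxHeartbeats 1000000
set_option maxHeartbeats 2000000

open ContinuousLinearMap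
open scoped InnerProductSpace

private lemma sq_eq_of_nonneg' {a b : ℝ} (ha : 0 ≤ a) (hb : 0 ≤ b) (h : a ^ 2 = b ^ 2) :
    a = b := by nlinarith

private lemma isom_norm' {F : Type*} [NormedAddCommGroup F] [InnerProductSpace ℂ F]
    [CompleteSpace F] (U : F →L[ℂ] F) (hU : adjoint U ∘L U = 1) (x : F) : ‖U x‖ = ‖x‖ := by
  have h1 : (adjoint U) (U x) = x := by
    have := ContinuousLinearMap.ext_iff.1 hU x; simpa using this
  have h2 : (⟪U x, U x⟫_ℂ) = ⟪x, x⟫_ℂ := by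
    rw [← ContinuousLinearMap.adjoint_inner_left, h1]
  have h3 : ‖U x‖ ^ 2 = ‖x‖ ^ 2 := by
    rw [← inner_self_eq_norm_sq (𝕜 := ℂ), ← inner_self_eq_norm_sq (𝕜 := ℂ), h2]
  exact sq_eq_of_nonneg' (norm_nonneg _) (norm_nonneg _) h3

private lemma pyth' {F : Type*} [NormedAddCommGroup F] [InnerProductSpace ℂ F]
    [CompleteSpace F] (P : F →L[ℂ] F) (hPsa : IsSelfAdjoint P)
    (a c : F) (ha : P a = a) (hc : P c = 0) : ‖a + c‖ ^ 2 = ‖a‖ ^ 2 + ‖c‖ ^ 2 := by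
  have hadj : ContinuousLinearMap.adjoint P = P := isSelfAdjoint_iff'.mp hPsa
  have h0 : (⟪a, c⟫_ℂ) = 0 := by
    rw [← ha, ← hadj, ContinuousLinearMap.adjoint_inner_left, hc, inner_zero_right]
  rw [@norm_add_sq ℂ, h0]
  simp

private lemma lp_norm_sq' {F : Type*} [NormedAddCommGroup F]
    (g : lp (fun _ : ℕ => F) 2) : ‖g‖ ^ 2 = ∑' n, ‖g n‖ ^ 2 := by
  have h := lp.norm_rpow_eq_tsum (p := 2) (by norm_num) g
  rw [show ((2 : ENNReal).toReal) = ((2 : ℕ) : ℝ) by norm_num] at h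
  simp_rw [Real.rpow_natCast] at h
  exact h

private lemma lp_summable' {F : Type*} [NormedAddCommGroup F]
    (g : lp (fun _ : ℕ => F) 2) : Summable fun n => ‖g n‖ ^ 2 := by
  have h := (lp.memℓp g).summable (p := 2) (by norm_num)
  rw [show ((2 : ENNReal).toReal) = ((2 : ℕ) : ℝ) by norm_num] at h
  simpa [Real.rpow_natCast] using h

private lemma tsum_shifted' {C D S : ℕ → ℝ} (A : ℝ) (s : ℕ → ℝ)
    (h0 : s 0 = A + D 0) (hs : ∀ n, s (n + 1) = C n + D (n + 1))
    (hC : ∀ n, 0 ≤ C n) (hD : ∀ n, 0 ≤ D n) (hCD : ∀ n, C n + D n = S n)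
    (hS : Summable S) : ∑' n, s n = A + ∑' n, S n := by
  have hCs : Summable C := by
    refine Summable.of_nonneg_of_le hC (fun n => ?_) hS
    rw [← hCD n]; linarith [hD n]
  have hDs : Summable D := by
    refine Summable.of_nonneg_of_le hD (fun n => ?_) hS
    rw [← hCD n]; linarith [hC n]
  have hD1 : Summable fun n => D (n + 1) := (summable_nat_add_iff 1).2 hDs
  have hs1 : Summable fun n => s (n + 1) := by
    simpa [hs] using hCs.add hD1
  have hss : Summable s := (summable_nat_add_iff 1).1 hs1
  have e1 : ∑' n, s n = A + D 0 + (∑' n, C n + ∑' n, D (n + 1)) := by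
    rw [Summable.tsum_eq_zero_add hss, h0]
    congr 1
    rw [← Summable.tsum_add hCs hD1]
    exact tsum_congr hs
  have e2 : ∑' n, D n = D 0 + ∑' n, D (n + 1) := Summable.tsum_eq_zero_add hDs
  have e3 : ∑' n, S n = ∑' n, C n + ∑' n, D n := by
    rw [← Summable.tsum_add hCs hDs]
    exact (tsum_congr hCD).symm
  linarith

theorem schaffer_lift_isometric_qcommuting
    {H : Type*} [NormedAddCommGroup H] [InnerProductSpace ℂ H] [CompleteSpace H]
    {F : Type*} [NormedAddCommGroup F] [InnerProductSpace ℂ F] [CompleteSpace F]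
    (q : ℂ) (hq : ‖q‖ = 1)
    (T1 T2 : H →L[ℂ] H) (hT1 : ‖T1‖ ≤ 1) (hT2 : ‖T2‖ ≤ 1)
    (hcomm : T1 * T2 = q • (T2 * T1))
    -- the special Andô tuple data: a projection P, a unitary U on F, and K = Λ D_T
    (P U : F →L[ℂ] F)
    (hPproj : P ∘L P = P) (hPsa : IsSelfAdjoint P)
    (hUuni : adjoint U ∘L U = 1 ∧ U ∘L adjoint U = 1)
    (K : H →L[ℂ] F)
    (hKiso : adjoint K ∘L K = 1 - adjoint (T1 * T2) ∘L (T1 * T2))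
    -- the special Andô tuple relations
    (r1 : adjoint T1 ∘L T1 + adjoint K ∘L adjoint U ∘L P ∘L U ∘L K = 1)
    (r2 : adjoint T2 ∘L T2 + adjoint K ∘L (1 - P) ∘L K = 1)
    (r3 : ∀ h : H, P (U (K (T2 h))) + (K h - P (K h)) = K h)
    (r4 : ∀ h : H, adjoint U ((K (T1 h) - P (K (T1 h))) + P (U (K h))) = K h)
    -- the Schäffer operators on H ⊕₂ ℓ²(ℕ, F), specified blockwise and coefficientwise
    (V1 V2 : WithLp 2 (H × lp (fun _ : ℕ => F) 2) →L[ℂ] WithLp 2 (H × lp (fun _ : ℕ => F) 2))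
    (hV1 : ∀ (h : H) (f : lp (fun _ : ℕ => F) 2),
      (WithLp.equiv 2 _ (V1 ((WithLp.equiv 2 _).symm (h, f)))).1 = T1 h ∧
      ((WithLp.equiv 2 _ (V1 ((WithLp.equiv 2 _).symm (h, f)))).2) 0
        = P (U (K h)) + q • (U (f 0) - P (U (f 0))) ∧
      ∀ n : ℕ, ((WithLp.equiv 2 _ (V1 ((WithLp.equiv 2 _).symm (h, f)))).2) (n + 1)
        = q ^ (n + 2) • (U (f (n + 1)) - P (U (f (n + 1)))) + q ^ (n + 1) • P (U (f n)))
    (hV2 : ∀ (h : H) (f : lp (fun _ : ℕ => F) 2),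
      (WithLp.equiv 2 _ (V2 ((WithLp.equiv 2 _).symm (h, f)))).1 = T2 h ∧
      ((WithLp.equiv 2 _ (V2 ((WithLp.equiv 2 _).symm (h, f)))).2) 0
        = (starRingEnd ℂ q) • adjoint U (K h - P (K h))
          + (starRingEnd ℂ q) • adjoint U (P (f 0)) ∧
      ∀ n : ℕ, ((WithLp.equiv 2 _ (V2 ((WithLp.equiv 2 _).symm (h, f)))).2) (n + 1)
        = (starRingEnd ℂ q) ^ (n + 2)
            • (adjoint U (P (f (n + 1))) + adjoint U (f n - P (f n)))) :
    V1 ∘L V2 = q • (V2 ∘L V1) ∧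
    (∀ x, ‖V1 x‖ = ‖x‖) ∧
    (∀ x, ‖V2 x‖ = ‖x‖) := by
  obtain ⟨hU1, hU2⟩ := hUuni
  have hq1 : q * starRingEnd ℂ q = 1 := by
    rw [Complex.mul_conj]
    norm_cast
    simp [Complex.normSq_eq_norm_sq, hq]
  have hq2 : starRingEnd ℂ q * q = 1 := by rw [mul_comm]; exact hq1
  have hqne : q ≠ 0 := by
    intro h0; rw [h0] at hq; simp at hq
  have hconj : starRingEnd ℂ q = q⁻¹ := eq_inv_of_mul_eq_one_left hq2
  have hqc : ‖starRingEnd ℂ q‖ = 1 := by rw [RCLike.norm_conj]; exact hq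
  have hPP : ∀ v : F, P (P v) = P v := fun v => by
    have := ContinuousLinearMap.ext_iff.1 hPproj v; simpa using this
  have hUU : ∀ v : F, adjoint U (U v) = v := fun v => by
    have := ContinuousLinearMap.ext_iff.1 hU1 v; simpa using this
  have hUU' : ∀ v : F, U (adjoint U v) = v := fun v => by
    have := ContinuousLinearMap.ext_iff.1 hU2 v; simpa using this
  have hUadj : adjoint (adjoint U) ∘L adjoint U = 1 := by
    rw [adjoint_adjoint]; exact hU2
  have hPadj : ContinuousLinearMap.adjoint P = P := isSelfAdjoint_iff'.mp hPsa
  refine ⟨?_, ?_, ?_⟩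
  · -- q-commutation
    ext x
    obtain ⟨w1, w2, w3⟩ := hV1 (WithLp.equiv 2 _ x).1 (WithLp.equiv 2 _ x).2
    obtain ⟨u1, u2, u3⟩ := hV2 (WithLp.equiv 2 _ x).1 (WithLp.equiv 2 _ x).2
    have hxid : (WithLp.equiv 2 (H × lp (fun _ : ℕ => F) 2)).symm
        ((WithLp.equiv 2 _ x).1, (WithLp.equiv 2 _ x).2) = x := rfl
    rw [hxid] at w1 w2 w3 u1 u2 u3
    obtain ⟨v1, v2, v3⟩ := hV1 (WithLp.equiv 2 _ (V2 x)).1 (WithLp.equiv 2 _ (V2 x)).2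
    have hx2 : (WithLp.equiv 2 (H × lp (fun _ : ℕ => F) 2)).symm
        ((WithLp.equiv 2 _ (V2 x)).1, (WithLp.equiv 2 _ (V2 x)).2) = V2 x := rfl
    rw [hx2] at v1 v2 v3
    obtain ⟨z1, z2, z3⟩ := hV2 (WithLp.equiv 2 _ (V1 x)).1 (WithLp.equiv 2 _ (V1 x)).2
    have hx1 : (WithLp.equiv 2 (H × lp (fun _ : ℕ => F) 2)).symm
        ((WithLp.equiv 2 _ (V1 x)).1, (WithLp.equiv 2 _ (V1 x)).2) = V1 x := rfl
    rw [hx1] at z1 z2 z3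
    simp only [ContinuousLinearMap.comp_apply, ContinuousLinearMap.smul_apply]
    apply (WithLp.equiv 2 (H × lp (fun _ : ℕ => F) 2)).injective
    apply Prod.ext
    · show (WithLp.equiv 2 _ (V1 (V2 x))).1 = q • (WithLp.equiv 2 _ (V2 (V1 x))).1
      rw [v1, u1, z1, w1]
      have := ContinuousLinearMap.ext_iff.1 hcomm ((WithLp.equiv 2 _ x).1)
      simpa using this
    · show (WithLp.equiv 2 _ (V1 (V2 x))).2 = q • (WithLp.equiv 2 _ (V2 (V1 x))).2
      apply lp.ext
      funext n
      have hcoe : (q • (WithLp.equiv 2 (H × lp (fun _ : ℕ => F) 2) (V2 (V1 x))).2) n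
          = q • ((WithLp.equiv 2 (H × lp (fun _ : ℕ => F) 2) (V2 (V1 x))).2 n) := by
        rw [lp.coeFn_smul]; rfl
      show (WithLp.equiv 2 _ (V1 (V2 x))).2 n
          = (q • (WithLp.equiv 2 (H × lp (fun _ : ℕ => F) 2) (V2 (V1 x))).2) n
      rw [hcoe]
      obtain _ | n := n
      · -- coefficient 0
        rw [v2, z2, u1, u2, w1, w2]
        have e1 : U ((starRingEnd ℂ q) • adjoint U (K ((WithLp.equiv 2 _ x).1)
              - P (K ((WithLp.equiv 2 _ x).1)))
            + (starRingEnd ℂ q) • adjoint U (P ((WithLp.equiv 2 _ x).2 0)))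
            = (starRingEnd ℂ q) • (K ((WithLp.equiv 2 _ x).1)
              - P (K ((WithLp.equiv 2 _ x).1)))
            + (starRingEnd ℂ q) • P ((WithLp.equiv 2 _ x).2 0) := by
          rw [map_add, map_smul, map_smul, hUU', hUU']
        rw [e1]
        have e2 : P ((starRingEnd ℂ q) • (K ((WithLp.equiv 2 _ x).1)
              - P (K ((WithLp.equiv 2 _ x).1)))
            + (starRingEnd ℂ q) • P ((WithLp.equiv 2 _ x).2 0))
            = (starRingEnd ℂ q) • P ((WithLp.equiv 2 _ x).2 0) := by
          rw [map_add, map_smul, map_smul, map_sub, hPP, sub_self, smul_zero, zero_add, hPP]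
        rw [e2, add_sub_cancel_right, smul_smul, hq1, one_smul]
        have e3 : P (P (U (K ((WithLp.equiv 2 _ x).1)))
            + q • (U ((WithLp.equiv 2 _ x).2 0) - P (U ((WithLp.equiv 2 _ x).2 0))))
            = P (U (K ((WithLp.equiv 2 _ x).1))) := by
          rw [map_add, map_smul, hPP, map_sub, hPP, sub_self, smul_zero, add_zero]
        rw [e3]
        have e4 : (starRingEnd ℂ q) • adjoint U (K (T1 ((WithLp.equiv 2 _ x).1))
              - P (K (T1 ((WithLp.equiv 2 _ x).1))))
            + (starRingEnd ℂ q) • adjoint U (P (U (K ((WithLp.equiv 2 _ x).1))))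
            = (starRingEnd ℂ q) • K ((WithLp.equiv 2 _ x).1) := by
          rw [← smul_add, ← map_add, r4]
        rw [e4, smul_smul, hq1, one_smul]
        exact r3 _
      · -- coefficient n+1
        rw [v3 n, z3 n]
        rw [u3 n, w3 n]
        obtain _ | m := n
        · -- n = 0 : second terms use u2 / w2
          rw [u2, w2]
          simp only [map_add, map_smul, map_sub, hUU, hUU', hPP, sub_self, smul_zero,
            zero_add, add_zero, smul_sub, smul_add, smul_smul]
          match_scalars <;> (try simp only [hconj]) <;> (try field_simp) <;> (try ring)
        · -- n = m+1 : second terms use u3 m / w3 m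
          rw [u3 m, w3 m]
          simp only [map_add, map_smul, map_sub, hUU, hUU', hPP, sub_self, smul_zero,
            zero_add, add_zero, smul_sub, smul_add, smul_smul]
          match_scalars <;> (try simp only [hconj]) <;> (try field_simp) <;> (try ring)
          <;> (field_simp; ring)
  · -- V1 is isometric
    intro x
    obtain ⟨w1, w2, w3⟩ := hV1 (WithLp.equiv 2 _ x).1 (WithLp.equiv 2 _ x).2
    have hxid : (WithLp.equiv 2 (H × lp (fun _ : ℕ => F) 2)).symm
        ((WithLp.equiv 2 _ x).1, (WithLp.equiv 2 _ x).2) = x := rfl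
    rw [hxid] at w1 w2 w3
    apply sq_eq_of_nonneg' (norm_nonneg _) (norm_nonneg _)
    rw [WithLp.prod_norm_sq_eq_of_L2, WithLp.prod_norm_sq_eq_of_L2,
      lp_norm_sq' (V1 x).snd, lp_norm_sq' x.snd]
    have hfst : (V1 x).fst = T1 ((WithLp.equiv 2 _ x).1) := w1
    have hxfst : x.fst = (WithLp.equiv 2 _ x).1 := rfl
    have hxsnd : ∀ n : ℕ, x.snd n = (WithLp.equiv 2 _ x).2 n := fun _ => rfl
    have hsum : ∑' n, ‖(V1 x).snd n‖ ^ 2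
        = ‖P (U (K ((WithLp.equiv 2 _ x).1)))‖ ^ 2
          + ∑' n, ‖(WithLp.equiv 2 _ x).2 n‖ ^ 2 := by
      have hh0 : ‖(V1 x).snd 0‖ ^ 2 = ‖P (U (K ((WithLp.equiv 2 _ x).1)))‖ ^ 2
          + ‖U ((WithLp.equiv 2 _ x).2 0) - P (U ((WithLp.equiv 2 _ x).2 0))‖ ^ 2 := by
        have hp := pyth' P hPsa (P (U (K ((WithLp.equiv 2 _ x).1))))
          (q • (U ((WithLp.equiv 2 _ x).2 0) - P (U ((WithLp.equiv 2 _ x).2 0))))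
          (hPP _) (by rw [map_smul, map_sub, hPP, sub_self, smul_zero])
        have hw2 : (V1 x).snd 0 = P (U (K ((WithLp.equiv 2 _ x).1)))
            + q • (U ((WithLp.equiv 2 _ x).2 0) - P (U ((WithLp.equiv 2 _ x).2 0))) := w2
        rw [hw2, hp]
        simp only [norm_smul, hq, one_mul]
      have hhs : ∀ n : ℕ, ‖(V1 x).snd (n + 1)‖ ^ 2
          = ‖P (U ((WithLp.equiv 2 _ x).2 n))‖ ^ 2
            + ‖U ((WithLp.equiv 2 _ x).2 (n + 1))
                - P (U ((WithLp.equiv 2 _ x).2 (n + 1)))‖ ^ 2 := by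
        intro n
        have hw3 : (V1 x).snd (n + 1)
            = q ^ (n + 2) • (U ((WithLp.equiv 2 _ x).2 (n + 1))
                - P (U ((WithLp.equiv 2 _ x).2 (n + 1))))
              + q ^ (n + 1) • P (U ((WithLp.equiv 2 _ x).2 n)) := w3 n
        have hp := pyth' P hPsa (q ^ (n + 1) • P (U ((WithLp.equiv 2 _ x).2 n)))
          (q ^ (n + 2) • (U ((WithLp.equiv 2 _ x).2 (n + 1))
            - P (U ((WithLp.equiv 2 _ x).2 (n + 1)))))
          (by rw [map_smul, hPP]) (by rw [map_smul, map_sub, hPP, sub_self, smul_zero])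
        rw [hw3, add_comm ((q : ℂ) ^ (n + 2) • _), hp]
        simp only [norm_smul, norm_pow, hq, one_pow, one_mul]
      have hhcd : ∀ n : ℕ, ‖P (U ((WithLp.equiv 2 _ x).2 n))‖ ^ 2
          + ‖U ((WithLp.equiv 2 _ x).2 n) - P (U ((WithLp.equiv 2 _ x).2 n))‖ ^ 2
          = ‖(WithLp.equiv 2 _ x).2 n‖ ^ 2 := by
        intro n
        have hp := pyth' P hPsa (P (U ((WithLp.equiv 2 _ x).2 n)))
          (U ((WithLp.equiv 2 _ x).2 n) - P (U ((WithLp.equiv 2 _ x).2 n)))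
          (hPP _) (by rw [map_sub, hPP, sub_self])
        have he : P (U ((WithLp.equiv 2 _ x).2 n))
            + (U ((WithLp.equiv 2 _ x).2 n) - P (U ((WithLp.equiv 2 _ x).2 n)))
            = U ((WithLp.equiv 2 _ x).2 n) := by abel
        rw [he] at hp
        rw [← hp, isom_norm' U hU1]
      exact tsum_shifted' (C := fun n => ‖P (U ((WithLp.equiv 2 _ x).2 n))‖ ^ 2)
        (D := fun n => ‖U ((WithLp.equiv 2 _ x).2 n) - P (U ((WithLp.equiv 2 _ x).2 n))‖ ^ 2)
        (S := fun n => ‖(WithLp.equiv 2 _ x).2 n‖ ^ 2) _ _ hh0 hhs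
        (fun n => by positivity) (fun n => by positivity) hhcd (lp_summable' _)
    have hfront : ‖T1 ((WithLp.equiv 2 _ x).1)‖ ^ 2
        + ‖P (U (K ((WithLp.equiv 2 _ x).1)))‖ ^ 2 = ‖(WithLp.equiv 2 _ x).1‖ ^ 2 := by
      set hh := (WithLp.equiv 2 (H × lp (fun _ : ℕ => F) 2) x).1 with hhdef
      have er1 : adjoint T1 (T1 hh) + adjoint K (adjoint U (P (U (K hh)))) = hh := by
        have := ContinuousLinearMap.ext_iff.1 r1 hh
        simpa [ContinuousLinearMap.add_apply, ContinuousLinearMap.comp_apply] using this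
      have einner : (⟪T1 hh, T1 hh⟫_ℂ) + ⟪P (U (K hh)), U (K hh)⟫_ℂ = ⟪hh, hh⟫_ℂ := by
        have := congrArg (fun v : H => (⟪v, hh⟫_ℂ)) er1
        simpa only [inner_add_left, ContinuousLinearMap.adjoint_inner_left] using this
      have eproj : (⟪P (U (K hh)), U (K hh)⟫_ℂ) = ⟪P (U (K hh)), P (U (K hh))⟫_ℂ := by
        have h1 := ContinuousLinearMap.adjoint_inner_left P (U (K hh)) (P (U (K hh)))
        rw [hPadj, hPP] at h1
        exact h1
      have e4 : (⟪T1 hh, T1 hh⟫_ℂ) + ⟪P (U (K hh)), P (U (K hh))⟫_ℂ = ⟪hh, hh⟫_ℂ := by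
        rw [← eproj]; exact einner
      rw [inner_self_eq_norm_sq_to_K, inner_self_eq_norm_sq_to_K,
        inner_self_eq_norm_sq_to_K] at e4
      exact_mod_cast e4
    have hxs2 : ∑' n, ‖x.snd n‖ ^ 2 = ∑' n, ‖(WithLp.equiv 2 _ x).2 n‖ ^ 2 := rfl
    rw [hfst, hxfst, hsum, hxs2]
    linarith
  · -- V2 is isometric
    intro x
    obtain ⟨w1, w2, w3⟩ := hV2 (WithLp.equiv 2 _ x).1 (WithLp.equiv 2 _ x).2
    have hxid : (WithLp.equiv 2 (H × lp (fun _ : ℕ => F) 2)).symm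
        ((WithLp.equiv 2 _ x).1, (WithLp.equiv 2 _ x).2) = x := rfl
    rw [hxid] at w1 w2 w3
    apply sq_eq_of_nonneg' (norm_nonneg _) (norm_nonneg _)
    rw [WithLp.prod_norm_sq_eq_of_L2, WithLp.prod_norm_sq_eq_of_L2,
      lp_norm_sq' (V2 x).snd, lp_norm_sq' x.snd]
    have hfst : (V2 x).fst = T2 ((WithLp.equiv 2 _ x).1) := w1
    have hxfst : x.fst = (WithLp.equiv 2 _ x).1 := rfl
    have hsum : ∑' n, ‖(V2 x).snd n‖ ^ 2
        = ‖K ((WithLp.equiv 2 _ x).1) - P (K ((WithLp.equiv 2 _ x).1))‖ ^ 2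
          + ∑' n, ‖(WithLp.equiv 2 _ x).2 n‖ ^ 2 := by
      have hh0 : ‖(V2 x).snd 0‖ ^ 2
          = ‖K ((WithLp.equiv 2 _ x).1) - P (K ((WithLp.equiv 2 _ x).1))‖ ^ 2
            + ‖P ((WithLp.equiv 2 _ x).2 0)‖ ^ 2 := by
        have hw2 : (V2 x).snd 0
            = (starRingEnd ℂ q) • adjoint U ((K ((WithLp.equiv 2 _ x).1)
                - P (K ((WithLp.equiv 2 _ x).1))) + P ((WithLp.equiv 2 _ x).2 0)) := by
          rw [map_add, smul_add]; exact w2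
        have hp := pyth' P hPsa (P ((WithLp.equiv 2 _ x).2 0))
          (K ((WithLp.equiv 2 _ x).1) - P (K ((WithLp.equiv 2 _ x).1)))
          (hPP _) (by rw [map_sub, hPP, sub_self])
        rw [hw2, norm_smul, hqc, one_mul, isom_norm' (adjoint U) hUadj,
          add_comm (K ((WithLp.equiv 2 _ x).1) - P (K ((WithLp.equiv 2 _ x).1))), hp]
        ring
      have hhs : ∀ n : ℕ, ‖(V2 x).snd (n + 1)‖ ^ 2
          = ‖(WithLp.equiv 2 _ x).2 n - P ((WithLp.equiv 2 _ x).2 n)‖ ^ 2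
            + ‖P ((WithLp.equiv 2 _ x).2 (n + 1))‖ ^ 2 := by
        intro n
        have hw3 : (V2 x).snd (n + 1)
            = (starRingEnd ℂ q) ^ (n + 2) • adjoint U (P ((WithLp.equiv 2 _ x).2 (n + 1))
                + ((WithLp.equiv 2 _ x).2 n - P ((WithLp.equiv 2 _ x).2 n))) := by
          rw [map_add]; exact w3 n
        have hp := pyth' P hPsa (P ((WithLp.equiv 2 _ x).2 (n + 1)))
          ((WithLp.equiv 2 _ x).2 n - P ((WithLp.equiv 2 _ x).2 n))
          (hPP _) (by rw [map_sub, hPP, sub_self])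
        rw [hw3, norm_smul, norm_pow, hqc, one_pow, one_mul,
          isom_norm' (adjoint U) hUadj, hp]
        ring
      have hhcd : ∀ n : ℕ, ‖(WithLp.equiv 2 _ x).2 n - P ((WithLp.equiv 2 _ x).2 n)‖ ^ 2
          + ‖P ((WithLp.equiv 2 _ x).2 n)‖ ^ 2 = ‖(WithLp.equiv 2 _ x).2 n‖ ^ 2 := by
        intro n
        have hp := pyth' P hPsa (P ((WithLp.equiv 2 _ x).2 n))
          ((WithLp.equiv 2 _ x).2 n - P ((WithLp.equiv 2 _ x).2 n))
          (hPP _) (by rw [map_sub, hPP, sub_self])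
        have he : P ((WithLp.equiv 2 _ x).2 n)
            + ((WithLp.equiv 2 _ x).2 n - P ((WithLp.equiv 2 _ x).2 n))
            = (WithLp.equiv 2 _ x).2 n := by abel
        rw [he] at hp
        rw [hp]
        ring
      exact tsum_shifted' (C := fun n => ‖(WithLp.equiv 2 _ x).2 n
          - P ((WithLp.equiv 2 _ x).2 n)‖ ^ 2)
        (D := fun n => ‖P ((WithLp.equiv 2 _ x).2 n)‖ ^ 2)
        (S := fun n => ‖(WithLp.equiv 2 _ x).2 n‖ ^ 2) _ _ hh0 hhs
        (fun n => by positivity) (fun n => by positivity) hhcd (lp_summable' _)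
    have hfront : ‖T2 ((WithLp.equiv 2 _ x).1)‖ ^ 2
        + ‖K ((WithLp.equiv 2 _ x).1) - P (K ((WithLp.equiv 2 _ x).1))‖ ^ 2
        = ‖(WithLp.equiv 2 _ x).1‖ ^ 2 := by
      set hh := (WithLp.equiv 2 (H × lp (fun _ : ℕ => F) 2) x).1 with hhdef
      have hQsa : IsSelfAdjoint ((1 : F →L[ℂ] F) - P) := ((IsSelfAdjoint.one (R := F →L[ℂ] F)).sub hPsa)
      have hQadj : ContinuousLinearMap.adjoint ((1 : F →L[ℂ] F) - P) = 1 - P :=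
        isSelfAdjoint_iff'.mp hQsa
      have hQv : ∀ v : F, ((1 : F →L[ℂ] F) - P) v = v - P v := fun v => by
        simp [ContinuousLinearMap.sub_apply]
      have hQQ : ∀ v : F, ((1 : F →L[ℂ] F) - P) (((1 : F →L[ℂ] F) - P) v)
          = ((1 : F →L[ℂ] F) - P) v := fun v => by
        simp only [ContinuousLinearMap.sub_apply, ContinuousLinearMap.one_apply,
          map_sub, hPP]
        abel
      have er2 : adjoint T2 (T2 hh) + adjoint K (((1 : F →L[ℂ] F) - P) (K hh)) = hh := by
        have := ContinuousLinearMap.ext_iff.1 r2 hh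
        simpa [ContinuousLinearMap.add_apply, ContinuousLinearMap.comp_apply] using this
      have einner : (⟪T2 hh, T2 hh⟫_ℂ)
          + ⟪((1 : F →L[ℂ] F) - P) (K hh), K hh⟫_ℂ = ⟪hh, hh⟫_ℂ := by
        have := congrArg (fun v : H => (⟪v, hh⟫_ℂ)) er2
        simpa only [inner_add_left, ContinuousLinearMap.adjoint_inner_left] using this
      have eproj : (⟪((1 : F →L[ℂ] F) - P) (K hh), K hh⟫_ℂ)
          = ⟪((1 : F →L[ℂ] F) - P) (K hh), ((1 : F →L[ℂ] F) - P) (K hh)⟫_ℂ := by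
        have h1 := ContinuousLinearMap.adjoint_inner_left ((1 : F →L[ℂ] F) - P) (K hh)
          (((1 : F →L[ℂ] F) - P) (K hh))
        rw [hQadj, hQQ] at h1
        exact h1
      have e4 : (⟪T2 hh, T2 hh⟫_ℂ)
          + ⟪((1 : F →L[ℂ] F) - P) (K hh), ((1 : F →L[ℂ] F) - P) (K hh)⟫_ℂ
          = ⟪hh, hh⟫_ℂ := by
        rw [← eproj]; exact einner
      rw [inner_self_eq_norm_sq_to_K, inner_self_eq_norm_sq_to_K,
        inner_self_eq_norm_sq_to_K] at e4
      have e6 : ‖T2 hh‖ ^ 2 + ‖((1 : F →L[ℂ] F) - P) (K hh)‖ ^ 2 = ‖hh‖ ^ 2 := by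
        exact_mod_cast e4
      rw [hQv] at e6
      exact e6
    have hxs2 : ∑' n, ‖x.snd n‖ ^ 2 = ∑' n, ‖(WithLp.equiv 2 _ x).2 n‖ ^ 2 := rfl
    rw [hfst, hxfst, hsum, hxs2]
    linarith
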